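/- Let D₁, D₂ be independent non-negative regularly-varying random variables with exponent γ ∈ (1,2) and finite mean. Let φ(x) = x - 1 + e^{-x}. Then for every δ > 0, lim_{t→∞} E[φ(D₁D₂/t)] / t^{-γ+δ} = 0. -/

import Mathlib

open MeasureTheory Filter

lemma phi_nonneg (x : ℝ) : 0 ≤ x - 1 + Real.exp (-x) := by
  have := Real.add_one_le_exp (-x); linarith

lemma phi_le_sq {x : ℝ} (h0 : 0 ≤ x) (h1 : x ≤ 1) :
    x - 1 + Real.exp (-x) ≤ x ^ 2 := by
  have hb := Real.exp_bound (x := -x) (by rw [abs_neg, abs_of_nonneg h0]; exact h1)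
    (n := 2) (by norm_num)
  have hsum : ∑ m ∈ Finset.range 2, (-x) ^ m / (Nat.factorial m) = 1 - x := by
    simp [Finset.sum_range_succ]; ring
  rw [hsum, abs_neg, abs_of_nonneg h0] at hb
  have := abs_le.mp hb
  have h34 : (3:ℝ)/(2*2) ≤ 1 := by norm_num
  have hx2 : (0:ℝ) ≤ x ^ 2 := sq_nonneg x
  have : Real.exp (-x) - (1 - x) ≤ x ^ 2 * ((2+1) / (2 * 2)) := by
    have := this.2
    norm_num at this ⊢
    linarith [this]
  nlinarith [this]

lemma phi_le_rpow {x β : ℝ} (h0 : 0 ≤ x) (hβ1 : 1 ≤ β) (hβ2 : β ≤ 2) :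
    x - 1 + Real.exp (-x) ≤ x ^ β := by
  rcases eq_or_lt_of_le h0 with h | hx0
  · simp [← h, Real.zero_rpow (by linarith : β ≠ 0)]
  rcases le_or_gt x 1 with hx1 | hx1
  · calc x - 1 + Real.exp (-x) ≤ x ^ 2 := phi_le_sq h0 hx1
      _ = x ^ (2:ℝ) := by rw [← Real.rpow_natCast x 2]; norm_num
      _ ≤ x ^ β := Real.rpow_le_rpow_of_exponent_ge hx0 hx1 hβ2
  · have h1 : Real.exp (-x) ≤ 1 := Real.exp_le_one_iff.mpr (by linarith)
    calc x - 1 + Real.exp (-x) ≤ x := by linarith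
      _ = x ^ (1:ℝ) := (Real.rpow_one x).symm
      _ ≤ x ^ β := Real.rpow_le_rpow_of_exponent_le hx1.le hβ1

lemma tail_pow_bound (F L : ℝ → ℝ) (γ ε : ℝ) (hγ : 0 < γ) (hε : 0 < ε)
    (hF0 : ∀ t, 0 ≤ F t) (hFanti : ∀ a b, 0 < a → a ≤ b → F b ≤ F a)
    (hFL : ∀ t > (0:ℝ), F t = L t * t ^ (-γ))
    (hL : Tendsto (fun t => L (2 * t) / L t) atTop (nhds 1)) :
    ∃ C > (0:ℝ), ∃ T ≥ (1:ℝ), ∀ u ≥ T, F u ≤ C * u ^ (ε - γ) := by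
  by_cases hz : ∃ t₀ > (0:ℝ), F t₀ = 0
  · obtain ⟨t₀, ht₀, hFt₀⟩ := hz
    refine ⟨1, one_pos, max t₀ 1, le_max_right _ _, fun u hu => ?_⟩
    have hu1 : (1:ℝ) ≤ u := le_trans (le_max_right t₀ 1) hu
    have : F u ≤ 0 := hFt₀ ▸ hFanti t₀ u ht₀ (le_trans (le_max_left t₀ 1) hu)
    have : F u = 0 := le_antisymm this (hF0 u)
    rw [this]
    positivity
  push_neg at hz
  have hFpos : ∀ t > (0:ℝ), 0 < F t := fun t ht =>
    lt_of_le_of_ne (hF0 t) (Ne.symm (hz t ht))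
  have hLF : ∀ t > (0:ℝ), L t = F t * t ^ γ := by
    intro t ht
    have := hFL t ht
    have htγ : t ^ (-γ) ≠ 0 := ne_of_gt (Real.rpow_pos_of_pos ht _)
    field_simp [Real.rpow_neg ht.le] at this ⊢
    rw [this, mul_assoc, ← Real.rpow_add ht, neg_add_cancel, Real.rpow_zero, mul_one]
  have hLpos : ∀ t > (0:ℝ), 0 < L t := fun t ht => by
    rw [hLF t ht]; exact mul_pos (hFpos t ht) (Real.rpow_pos_of_pos ht _)
  -- eventually L(2t) ≤ 2^ε * L t
  have h2ε : (1:ℝ) < 2 ^ ε := Real.one_lt_rpow_iff_of_pos (by norm_num) |>.mpr (Or.inl ⟨one_lt_two, hε⟩)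
  have hev : ∀ᶠ t in atTop, L (2 * t) / L t ≤ 2 ^ ε :=
    hL.eventually_le_const h2ε
  obtain ⟨T₀', hT₀'⟩ := hev.exists_forall_of_atTop
  set T₀ : ℝ := max T₀' 1 with hT₀def
  have hT₀1 : (1:ℝ) ≤ T₀ := le_max_right _ _
  have hT₀pos : (0:ℝ) < T₀ := lt_of_lt_of_le one_pos hT₀1
  have hstep : ∀ t ≥ T₀, L (2 * t) ≤ 2 ^ ε * L t := by
    intro t ht
    have htpos : 0 < t := lt_of_lt_of_le hT₀pos ht
    have := hT₀' t (le_trans (le_max_left _ _) ht)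
    rw [div_le_iff₀ (hLpos t htpos)] at this
    linarith
  set M : ℝ := F T₀ * (2 * T₀) ^ γ with hMdef
  have hMpos : 0 < M := mul_pos (hFpos T₀ hT₀pos) (Real.rpow_pos_of_pos (by linarith) _)
  have hbase : ∀ t, T₀ ≤ t → t ≤ 2 * T₀ → L t ≤ M := by
    intro t h1 h2
    have htpos : 0 < t := lt_of_lt_of_le hT₀pos h1
    rw [hLF t htpos, hMdef]
    have := hFanti T₀ t hT₀pos h1
    have h2' : t ^ γ ≤ (2 * T₀) ^ γ := Real.rpow_le_rpow htpos.le h2 hγ.le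
    exact mul_le_mul this h2' (Real.rpow_nonneg htpos.le _) (hF0 T₀)
  have hind : ∀ n : ℕ, ∀ t, T₀ ≤ t → t ≤ 2 * T₀ → L (2 ^ n * t) ≤ (2 ^ ε) ^ n * M := by
    intro n
    induction n with
    | zero => intro t h1 h2; simpa using hbase t h1 h2
    | succ n ih =>
      intro t h1 h2
      have h2n : (1:ℝ) ≤ 2 ^ n := one_le_pow₀ (by norm_num)
      have hge : T₀ ≤ 2 ^ n * t := le_trans h1 (le_mul_of_one_le_left (by linarith) h2n)
      have : L (2 * (2 ^ n * t)) ≤ 2 ^ ε * L (2 ^ n * t) := hstep _ hge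
      have h3 : (2:ℝ) ^ (n+1) * t = 2 * (2 ^ n * t) := by ring
      rw [h3]
      calc L (2 * (2 ^ n * t)) ≤ 2 ^ ε * L (2 ^ n * t) := this
        _ ≤ 2 ^ ε * ((2 ^ ε) ^ n * M) := by
            have := ih t h1 h2
            nlinarith [Real.rpow_pos_of_pos (show (0:ℝ) < 2 by norm_num) ε]
        _ = (2 ^ ε) ^ (n+1) * M := by ring
  refine ⟨M * T₀ ^ (-ε), by positivity, max T₀ 1, le_max_right _ _, fun u hu => ?_⟩
  have huT₀ : T₀ ≤ u := le_trans (le_max_left _ _) hu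
  have hupos : 0 < u := lt_of_lt_of_le hT₀pos huT₀
  -- find n with 2^n ≤ u/T₀ < 2^(n+1)
  set r : ℝ := u / T₀ with hrdef
  have hr1 : 1 ≤ r := (one_le_div hT₀pos).mpr huT₀
  set n : ℕ := ⌊Real.logb 2 r⌋₊ with hndef
  have hlogb0 : 0 ≤ Real.logb 2 r := Real.logb_nonneg one_lt_two hr1
  have hn1 : (n:ℝ) ≤ Real.logb 2 r := Nat.floor_le hlogb0
  have hn2 : Real.logb 2 r < n + 1 := Nat.lt_floor_add_one _
  have hrpos : 0 < r := lt_of_lt_of_le one_pos hr1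
  have h2n_le : (2:ℝ) ^ n ≤ r := by
    have := Real.rpow_le_rpow_of_exponent_le one_le_two hn1
    rwa [Real.rpow_natCast, Real.rpow_logb (by norm_num) (by norm_num) hrpos] at this
  have h2n_gt : r < 2 ^ (n+1) := by
    have := Real.rpow_lt_rpow_of_exponent_lt one_lt_two hn2
    rw [Real.rpow_logb (by norm_num) (by norm_num) hrpos] at this
    calc r < (2:ℝ) ^ ((n:ℝ)+1) := this
      _ = 2 ^ (n+1) := by
        rw [← Real.rpow_natCast 2 (n+1)]; push_cast; ring_nf
  set t : ℝ := u / 2 ^ n with htdef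
  have h2npos : (0:ℝ) < 2 ^ n := by positivity
  have ht1 : T₀ ≤ t := by
    rw [htdef, le_div_iff₀ h2npos]
    calc T₀ * 2 ^ n = 2 ^ n * T₀ := by ring
      _ ≤ u := by
        rw [hrdef] at h2n_le
        calc (2:ℝ) ^ n * T₀ ≤ (u / T₀) * T₀ := by nlinarith
          _ = u := by field_simp
  have ht2 : t ≤ 2 * T₀ := by
    rw [htdef, div_le_iff₀ h2npos]
    have : u < 2 ^ (n+1) * T₀ := by
      rw [hrdef] at h2n_gt
      calc u = (u / T₀) * T₀ := by field_simp
        _ < 2 ^ (n+1) * T₀ := by nlinarith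
    have he : (2:ℝ) ^ (n+1) * T₀ = 2 * T₀ * 2 ^ n := by ring
    linarith [he ▸ this]
  have hut : u = 2 ^ n * t := by rw [htdef]; field_simp
  have hLu : L u ≤ (2 ^ ε) ^ n * M := hut ▸ hind n t ht1 ht2
  -- (2^ε)^n ≤ (u/T₀)^ε
  have hpow : ((2:ℝ) ^ ε) ^ n ≤ r ^ ε := by
    rw [← Real.rpow_natCast (2 ^ ε) n, ← Real.rpow_mul (by norm_num : (0:ℝ) ≤ 2),
      mul_comm ε (n:ℝ), Real.rpow_mul (by norm_num : (0:ℝ) ≤ 2), Real.rpow_natCast]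
    exact Real.rpow_le_rpow (by positivity) h2n_le hε.le
  have hrε : r ^ ε = u ^ ε * T₀ ^ (-ε) := by
    rw [hrdef, Real.div_rpow hupos.le hT₀pos.le, Real.rpow_neg hT₀pos.le, div_eq_mul_inv]
  have hLu2 : L u ≤ u ^ ε * T₀ ^ (-ε) * M := by
    calc L u ≤ (2 ^ ε) ^ n * M := hLu
      _ ≤ r ^ ε * M := by nlinarith
      _ = u ^ ε * T₀ ^ (-ε) * M := by rw [hrε]
  rw [hFL u hupos]
  have huγ : (0:ℝ) < u ^ (-γ) := Real.rpow_pos_of_pos hupos _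
  calc L u * u ^ (-γ) ≤ (u ^ ε * T₀ ^ (-ε) * M) * u ^ (-γ) := by nlinarith
    _ = M * T₀ ^ (-ε) * (u ^ ε * u ^ (-γ)) := by ring
    _ = M * T₀ ^ (-ε) * u ^ (ε - γ) := by
        rw [← Real.rpow_add hupos]; ring_nf

open Set in
lemma integrable_rpow_of_tail {Ω : Type*} [MeasurableSpace Ω] (P : Measure Ω)
    [IsProbabilityMeasure P] (D : Ω → ℝ) (hD : Measurable D) (hnn : ∀ ω, 0 ≤ D ω)
    (β p C T : ℝ) (h0β : 0 < β) (hβp : β < p) (hC : 0 < C) (hT : 1 ≤ T)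
    (htail : ∀ u ≥ T, (P {ω | D ω > u}).toReal ≤ C * u ^ (-p)) :
    Integrable (fun ω => D ω ^ β) P := by
  have hfm : Measurable (fun ω => D ω ^ β) := by fun_prop
  have hfnn : ∀ ω, 0 ≤ D ω ^ β := fun ω => Real.rpow_nonneg (hnn ω) β
  rw [← memLp_one_iff_integrable]
  refine ⟨hfm.aestronglyMeasurable, ?_⟩
  rw [eLpNorm_one_eq_lintegral_enorm]
  have key : ∀ ω, ‖D ω ^ β‖ₑ = ENNReal.ofReal (D ω ^ β) := fun ω =>
    (Real.enorm_eq_ofReal (hfnn ω))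
  simp_rw [key]
  rw [lintegral_eq_lintegral_meas_lt P (ae_of_all _ hfnn) hfm.aemeasurable]
  set S : ℝ := T ^ β with hSdef
  have hS1 : (1:ℝ) ≤ S := Real.one_le_rpow hT h0β.le
  have hS0 : (0:ℝ) < S := lt_of_lt_of_le one_pos hS1
  have hsplit : Ioi (0:ℝ) = Ioc 0 S ∪ Ioi S := (Set.Ioc_union_Ioi_eq_Ioi hS0.le).symm
  rw [hsplit, lintegral_union measurableSet_Ioi (Set.Ioc_disjoint_Ioi le_rfl)]
  have h1 : ∫⁻ t in Ioc (0:ℝ) S, P {a | t < D a ^ β} ≤ ENNReal.ofReal S := by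
    calc ∫⁻ t in Ioc (0:ℝ) S, P {a | t < D a ^ β} ≤ ∫⁻ _ in Ioc (0:ℝ) S, 1 :=
          lintegral_mono fun t => prob_le_one
      _ = volume (Ioc (0:ℝ) S) := by rw [setLIntegral_one]
      _ = ENNReal.ofReal S := by rw [Real.volume_Ioc, sub_zero]
  have h2 : ∫⁻ t in Ioi S, P {a | t < D a ^ β} < ⊤ := by
    have hq : -(p / β) < -1 := by
      rw [neg_lt_neg_iff]; exact (one_lt_div h0β).mpr hβp
    have hint : IntegrableOn (fun t : ℝ => C * t ^ (-(p/β))) (Ioi S) :=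
      (integrableOn_Ioi_rpow_of_lt hq hS0).const_mul C
    have hbound : ∀ t ∈ Ioi S, P {a | t < D a ^ β} ≤ ENNReal.ofReal (C * t ^ (-(p/β))) := by
      intro t ht
      have htS : S < t := ht
      have ht0 : (0:ℝ) < t := lt_of_le_of_lt hS0.le htS
      set u : ℝ := t ^ (1/β) with hudef
      have hu0 : 0 < u := Real.rpow_pos_of_pos ht0 _
      have huT : T ≤ u := by
        have : S ^ (1/β) ≤ u := Real.rpow_le_rpow hS0.le htS.le (by positivity)
        rwa [hSdef, ← Real.rpow_mul (by linarith : (0:ℝ) ≤ T),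
          mul_one_div_cancel (ne_of_gt h0β), Real.rpow_one] at this
      have hset : {a | t < D a ^ β} ⊆ {a | D a > u} := by
        intro a ha
        simp only [Set.mem_setOf_eq] at ha ⊢
        have huβ : u ^ β = t := by
          rw [hudef, ← Real.rpow_mul ht0.le, one_div_mul_cancel (ne_of_gt h0β), Real.rpow_one]
        have : u ^ β < D a ^ β := by rw [huβ]; exact ha
        exact (Real.rpow_lt_rpow_iff hu0.le (hnn a) h0β).mp this
      have hup : u ^ (-p) = t ^ (-(p/β)) := by
        rw [hudef, ← Real.rpow_mul ht0.le]
        ring_nf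
      calc P {a | t < D a ^ β} ≤ P {a | D a > u} := measure_mono hset
        _ = ENNReal.ofReal ((P {a | D a > u}).toReal) :=
            (ENNReal.ofReal_toReal (measure_ne_top P _)).symm
        _ ≤ ENNReal.ofReal (C * u ^ (-p)) := ENNReal.ofReal_le_ofReal (htail u huT)
        _ = ENNReal.ofReal (C * t ^ (-(p/β))) := by rw [hup]
    have hgm : Measurable fun t : ℝ => ENNReal.ofReal (C * t ^ (-(p/β))) :=
      by fun_prop
    calc ∫⁻ t in Ioi S, P {a | t < D a ^ β}
        ≤ ∫⁻ t in Ioi S, ENNReal.ofReal (C * t ^ (-(p/β))) := by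
          exact setLIntegral_mono hgm hbound
      _ ≤ ∫⁻ t in Ioi S, ‖C * t ^ (-(p/β))‖ₑ :=
          lintegral_mono fun t => Real.ofReal_le_enorm _
      _ < ⊤ := hint.2
  exact ENNReal.add_lt_top.mpr ⟨lt_of_le_of_lt h1 ENNReal.ofReal_lt_top, h2⟩

theorem stmt11 {Ω : Type*} [MeasurableSpace Ω] (P : Measure Ω) [IsProbabilityMeasure P]
    (D₁ D₂ : Ω → ℝ) (h1 : Measurable D₁) (h2 : Measurable D₂)
    (hnn1 : ∀ ω, 0 ≤ D₁ ω) (hnn2 : ∀ ω, 0 ≤ D₂ ω)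
    (hindep : ProbabilityTheory.IndepFun D₁ D₂ P)
    (γ : ℝ) (hγ1 : 1 < γ) (hγ2 : γ < 2)
    (L₁ L₂ : ℝ → ℝ)
    (hL1 : ∀ c > (0:ℝ), Tendsto (fun t => L₁ (c * t) / L₁ t) atTop (nhds 1))
    (hL2 : ∀ c > (0:ℝ), Tendsto (fun t => L₂ (c * t) / L₂ t) atTop (nhds 1))
    (htail1 : ∀ t > (0:ℝ), (P {ω | D₁ ω > t}).toReal = L₁ t * t ^ (-γ))
    (htail2 : ∀ t > (0:ℝ), (P {ω | D₂ ω > t}).toReal = L₂ t * t ^ (-γ))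
    (hint1 : Integrable D₁ P) (hint2 : Integrable D₂ P) :
    ∀ δ > (0:ℝ),
      Tendsto (fun t : ℝ =>
          (∫ ω, (D₁ ω * D₂ ω / t - 1 + Real.exp (-(D₁ ω * D₂ ω / t))) ∂P) / t ^ (-γ + δ))
        atTop (nhds 0) := by
  intro δ hδ
  set ε : ℝ := min δ (γ - 1) / 2 with hεdef
  have hε : 0 < ε := by
    have : 0 < min δ (γ - 1) := lt_min hδ (by linarith)
    positivity
  have hεδ : ε ≤ δ / 2 := by
    have := min_le_left δ (γ - 1); simp only [hεdef]; linarith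
  have hεγ : ε ≤ (γ - 1) / 2 := by
    have := min_le_right δ (γ - 1); simp only [hεdef]; linarith
  set β : ℝ := γ - ε with hβdef
  have hβ1 : 1 < β := by simp only [hβdef]; linarith
  have hβ2 : β < 2 := by simp only [hβdef]; linarith
  set p : ℝ := γ - ε / 2 with hpdef
  have hβp : β < p := by simp only [hβdef, hpdef]; linarith
  have hε2γ : ε / 2 - γ = -p := by simp only [hpdef]; ring
  -- tail bounds
  have hanti : ∀ (D : Ω → ℝ), ∀ a b : ℝ, 0 < a → a ≤ b →
      (P {ω | D ω > b}).toReal ≤ (P {ω | D ω > a}).toReal := by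
    intro D a b _ hab
    exact ENNReal.toReal_mono (measure_ne_top P _)
      (measure_mono fun ω h => lt_of_le_of_lt hab h)
  obtain ⟨C₁, hC₁pos, T₁, hT₁, hC₁⟩ := tail_pow_bound (fun t => (P {ω | D₁ ω > t}).toReal) L₁
    γ (ε/2) (by linarith) (by linarith) (fun t => ENNReal.toReal_nonneg)
    (hanti D₁) htail1 (hL1 2 two_pos)
  obtain ⟨C₂, hC₂pos, T₂, hT₂, hC₂⟩ := tail_pow_bound (fun t => (P {ω | D₂ ω > t}).toReal) L₂
    γ (ε/2) (by linarith) (by linarith) (fun t => ENNReal.toReal_nonneg)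
    (hanti D₂) htail2 (hL2 2 two_pos)
  have hg1 : Integrable (fun ω => D₁ ω ^ β) P :=
    integrable_rpow_of_tail P D₁ h1 hnn1 β p C₁ T₁ (by linarith) hβp hC₁pos hT₁
      (fun u hu => by have := hC₁ u hu; rwa [hε2γ] at this)
  have hg2 : Integrable (fun ω => D₂ ω ^ β) P :=
    integrable_rpow_of_tail P D₂ h2 hnn2 β p C₂ T₂ (by linarith) hβp hC₂pos hT₂
      (fun u hu => by have := hC₂ u hu; rwa [hε2γ] at this)
  have hgindep : ProbabilityTheory.IndepFun (fun ω => D₁ ω ^ β) (fun ω => D₂ ω ^ β) P :=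
    hindep.comp (by fun_prop : Measurable fun x : ℝ => x ^ β)
      (by fun_prop : Measurable fun x : ℝ => x ^ β)
  have hXβ : Integrable ((fun ω => D₁ ω ^ β) * (fun ω => D₂ ω ^ β)) P :=
    hgindep.integrable_mul hg1 hg2
  have hprod : Integrable (fun ω => (D₁ ω * D₂ ω) ^ β) P := by
    refine hXβ.congr (ae_of_all _ fun ω => ?_)
    simp only [Pi.mul_apply]
    exact (Real.mul_rpow (hnn1 ω) (hnn2 ω)).symm
  set K : ℝ := ∫ ω, (D₁ ω * D₂ ω) ^ β ∂P with hKdef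
  have hK0 : 0 ≤ K :=
    integral_nonneg fun ω => Real.rpow_nonneg (mul_nonneg (hnn1 ω) (hnn2 ω)) β
  set f : ℝ → ℝ := fun t =>
      (∫ ω, (D₁ ω * D₂ ω / t - 1 + Real.exp (-(D₁ ω * D₂ ω / t))) ∂P) / t ^ (-γ + δ)
    with hfdef
  have hlow : ∀ t : ℝ, 1 ≤ t → 0 ≤ f t := by
    intro t ht
    have ht0 : (0:ℝ) < t := lt_of_lt_of_le one_pos ht
    refine div_nonneg (integral_nonneg fun ω => phi_nonneg _) (Real.rpow_pos_of_pos ht0 _).le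
  have hup : ∀ t : ℝ, 1 ≤ t → f t ≤ K * t ^ (γ - δ - β) := by
    intro t ht
    have ht0 : (0:ℝ) < t := lt_of_lt_of_le one_pos ht
    have hd : (0:ℝ) < t ^ (-γ + δ) := Real.rpow_pos_of_pos ht0 _
    have hpt : ∀ ω, D₁ ω * D₂ ω / t - 1 + Real.exp (-(D₁ ω * D₂ ω / t))
        ≤ (D₁ ω * D₂ ω) ^ β * t ^ (-β) := by
      intro ω
      have hx0 : 0 ≤ D₁ ω * D₂ ω / t := div_nonneg (mul_nonneg (hnn1 ω) (hnn2 ω)) ht0.le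
      calc D₁ ω * D₂ ω / t - 1 + Real.exp (-(D₁ ω * D₂ ω / t))
          ≤ (D₁ ω * D₂ ω / t) ^ β := phi_le_rpow hx0 hβ1.le hβ2.le
        _ = (D₁ ω * D₂ ω) ^ β * t ^ (-β) := by
            rw [Real.div_rpow (mul_nonneg (hnn1 ω) (hnn2 ω)) ht0.le,
              Real.rpow_neg ht0.le, div_eq_mul_inv]
    have hmaj : Integrable (fun ω => (D₁ ω * D₂ ω) ^ β * t ^ (-β)) P :=
      hprod.mul_const _
    have hφint : Integrable
        (fun ω => D₁ ω * D₂ ω / t - 1 + Real.exp (-(D₁ ω * D₂ ω / t))) P := by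
      refine hmaj.mono' ?_ (ae_of_all _ fun ω => ?_)
      · apply Measurable.aestronglyMeasurable
        fun_prop
      · rw [Real.norm_eq_abs, abs_of_nonneg (phi_nonneg _)]
        exact hpt ω
    have hIle : (∫ ω, (D₁ ω * D₂ ω / t - 1 + Real.exp (-(D₁ ω * D₂ ω / t))) ∂P)
        ≤ K * t ^ (-β) := by
      calc (∫ ω, (D₁ ω * D₂ ω / t - 1 + Real.exp (-(D₁ ω * D₂ ω / t))) ∂P)
          ≤ ∫ ω, (D₁ ω * D₂ ω) ^ β * t ^ (-β) ∂P :=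
            integral_mono hφint hmaj hpt
        _ = K * t ^ (-β) := by rw [integral_mul_const]
    have hdiv : K * t ^ (γ - δ - β) = (K * t ^ (-β)) / t ^ (-γ + δ) := by
      rw [mul_div_assoc, ← Real.rpow_sub ht0]
      ring_nf
    simp only [hfdef]
    rw [hdiv]
    exact (div_le_div_iff_of_pos_right hd).mpr hIle
  have hrhs : Tendsto (fun t : ℝ => K * t ^ (γ - δ - β)) atTop (nhds 0) := by
    have hy : 0 < β + δ - γ := by simp only [hβdef]; linarith
    have h0 := (tendsto_rpow_neg_atTop hy).const_mul K
    rw [mul_zero] at h0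
    convert h0 using 2 with t
    ring_nf
  refine tendsto_of_tendsto_of_tendsto_of_le_of_le' tendsto_const_nhds hrhs ?_ ?_
  · filter_upwards [eventually_ge_atTop (1:ℝ)] with t ht using hlow t ht
  · filter_upwards [eventually_ge_atTop (1:ℝ)] with t ht using hup t ht
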